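/- arXiv:2108.04094 — 2 statements merged into one kernel-verified Lean document; each statement's English description precedes it below -/
import Mathlib

section
/- Let A be a commutative ring, let R = A[u], π ∈ A, and let E ⊆ R[1/(u-π)]^d be a finitely generated projective R-submodule with (u-π)^a R^d ⊆ E ⊆ (u-π)^{-a} R^d for some a ≥ 0. Define E* := Hom_R(E, R), viewed inside R[1/(u-π)]^d via the standard pairing on R[1/(u-π)]^d extending the dual basis identification (R^d)* ≅ R^d. Then E* is finitely generated projective of the same rank, satisfies (u-π)^a R^d ⊆ E* ⊆ (u-π)^{-a} R^d, and E** = E. Moreover, if E is free with basis the columns of a matrix X ∈ GL_d(R[1/(u-π)]), then E* is free with basis the columns of the inverse transpose (X^{-1})^t. -/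
open Polynomial

/-- The localization `A[u][1/(u-π)]`. -/
abbrev Sloc (A : Type*) [CommRing A] (π : A) :=
  Localization.Away ((X : Polynomial A) - C π)

/-- The standard lattice `R^d` inside `(A[u][1/(u-π)])^d`. -/
noncomputable def stdLat (A : Type*) [CommRing A] (π : A) (d : ℕ) :
    Submodule (Polynomial A) (Fin d → Sloc A π) :=
  Submodule.span (Polynomial A) (Set.range fun i : Fin d => Pi.single i (1 : Sloc A π))

/-- Scaling a lattice by an element `c` of the localization. -/
noncomputable def scaleLat (A : Type*) [CommRing A] (π : A) (d : ℕ) (c : Sloc A π)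
    (N : Submodule (Polynomial A) (Fin d → Sloc A π)) :
    Submodule (Polynomial A) (Fin d → Sloc A π) :=
  Submodule.map ((LinearMap.lsmul (Sloc A π) (Fin d → Sloc A π) c).restrictScalars
    (Polynomial A)) N

/-- The dual lattice `{ v : ⟨v, E⟩ ⊆ R }` for the standard pairing. -/
noncomputable def dualSet (A : Type*) [CommRing A] (π : A) (d : ℕ)
    (E : Submodule (Polynomial A) (Fin d → Sloc A π)) : Set (Fin d → Sloc A π) :=
  { v | ∀ w ∈ E, (∑ i, v i * w i) ∈ (algebraMap (Polynomial A) (Sloc A π)).range }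

/-- The `j`-th standard basis vector of `(Sloc A π)^d`. -/
noncomputable def epsV (A : Type*) [CommRing A] (π : A) (d : ℕ) (j : Fin d) :
    Fin d → Sloc A π :=
  Pi.single j 1

/-- Pairing against a fixed vector `q` cuts out a `Polynomial A`-submodule. -/
noncomputable def pairSub (A : Type*) [CommRing A] (π : A) (d : ℕ) (q : Fin d → Sloc A π) :
    Submodule (Polynomial A) (Fin d → Sloc A π) where
  carrier := {v | ∑ i, v i * q i ∈ (algebraMap (Polynomial A) (Sloc A π)).range}
  add_mem' := by
    intro x y hx hy
    simp only [Set.mem_setOf_eq] at *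
    have : ∑ i, (x + y) i * q i = (∑ i, x i * q i) + ∑ i, y i * q i := by
      rw [← Finset.sum_add_distrib]
      exact Finset.sum_congr rfl fun i _ => by simp [add_mul]
    rw [this]; exact add_mem hx hy
  zero_mem' := by
    simp only [Set.mem_setOf_eq, Pi.zero_apply, zero_mul, Finset.sum_const_zero]
    exact zero_mem _
  smul_mem' := by
    intro r x hx
    simp only [Set.mem_setOf_eq] at *
    have : ∑ i, (r • x) i * q i = algebraMap (Polynomial A) (Sloc A π) r * ∑ i, x i * q i := by
      rw [Finset.mul_sum]
      exact Finset.sum_congr rfl fun i _ => by simp [Algebra.smul_def, mul_assoc]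
    rw [this]
    exact mul_mem (RingHom.mem_range_self _ r) hx

theorem mem_pairSub {A : Type*} [CommRing A] {π : A} {d : ℕ} {q x : Fin d → Sloc A π} :
    x ∈ pairSub A π d q ↔
      ∑ i, x i * q i ∈ (algebraMap (Polynomial A) (Sloc A π)).range :=
  Iff.rfl

set_option maxHeartbeats 2000000 in
theorem stmt_11 (A : Type*) [CommRing A] (π : A) (d a : ℕ)
    (E : Submodule (Polynomial A) (Fin d → Sloc A π))
    (hFG : E.FG) (hproj : Module.Projective (Polynomial A) E)
    (hlow : scaleLat A π d (algebraMap (Polynomial A) (Sloc A π)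
      (((X : Polynomial A) - C π) ^ a)) (stdLat A π d) ≤ E)
    (hhigh : E ≤ scaleLat A π d
      ((IsLocalization.Away.invSelf (S := Sloc A π) ((X : Polynomial A) - C π)) ^ a)
      (stdLat A π d)) :
    ∃ Estar : Submodule (Polynomial A) (Fin d → Sloc A π),
      (Estar : Set (Fin d → Sloc A π)) = dualSet A π d E ∧
      Estar.FG ∧ Module.Projective (Polynomial A) Estar ∧
      Module.rank (Polynomial A) Estar = Module.rank (Polynomial A) E ∧
      scaleLat A π d (algebraMap (Polynomial A) (Sloc A π)
        (((X : Polynomial A) - C π) ^ a)) (stdLat A π d) ≤ Estar ∧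
      Estar ≤ scaleLat A π d
        ((IsLocalization.Away.invSelf (S := Sloc A π) ((X : Polynomial A) - C π)) ^ a)
        (stdLat A π d) ∧
      dualSet A π d Estar = (E : Set (Fin d → Sloc A π)) ∧
      ∀ (Xm Xi : Matrix (Fin d) (Fin d) (Sloc A π)),
        Xm * Xi = 1 → Xi * Xm = 1 →
        E = Submodule.span (Polynomial A) (Set.range fun j : Fin d => fun i => Xm i j) →
        Estar = Submodule.span (Polynomial A)
          (Set.range fun j : Fin d => fun i => Xi j i) := by
  classical
  set t : Polynomial A := (X : Polynomial A) - C π with htdef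
  set alg := algebraMap (Polynomial A) (Sloc A π) with halgdef
  set T : Sloc A π := alg t with hTdef
  set Ti : Sloc A π := IsLocalization.Away.invSelf (S := Sloc A π) t with hTidef
  set ε := epsV A π d with hεdef
  have hεapp : ∀ j i, ε j i = if i = j then 1 else 0 := by
    intro j i
    show (Pi.single j (1 : Sloc A π) : Fin d → Sloc A π) i = _
    rw [Pi.single_apply]
  have halg : Function.Injective alg :=
    IsLocalization.injective _ (Submonoid.powers_le.2 ((monic_X_sub_C π).mem_nonZeroDivisors))
  have hTTi : T * Ti = 1 := IsLocalization.Away.mul_invSelf _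
  have hTa : T ^ a * Ti ^ a = 1 := by rw [← mul_pow, hTTi, one_pow]
  have hTia : Ti ^ a * T ^ a = 1 := by rw [mul_comm]; exact hTa
  have hUT : IsUnit (T ^ a) := IsUnit.of_mul_eq_one _ hTa
  have hUTi : IsUnit (Ti ^ a) := IsUnit.of_mul_eq_one _ hTia
  have halgpow : alg (t ^ a) = T ^ a := by rw [map_pow, hTdef]
  -- membership in the standard lattice
  have hstd1 : ∀ y ∈ stdLat A π d, ∀ i, y i ∈ alg.range := by
    have hle : stdLat A π d ≤ Submodule.pi Set.univ
        (fun _ : Fin d => LinearMap.range (Algebra.linearMap (Polynomial A) (Sloc A π))) := by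
      rw [stdLat, Submodule.span_le]
      rintro _ ⟨i, rfl⟩ j _
      rcases eq_or_ne j i with h | h
      · subst h; exact ⟨1, by simp⟩
      · exact ⟨0, by simp [Pi.single_eq_of_ne h]⟩
    intro y hy i
    obtain ⟨r, hr⟩ := hle hy i (Set.mem_univ i)
    exact ⟨r, hr⟩
  have hεstd : ∀ j, ε j ∈ stdLat A π d := fun j => Submodule.subset_span ⟨j, rfl⟩
  have hstd2 : ∀ y : Fin d → Sloc A π, (∀ i, y i ∈ alg.range) → y ∈ stdLat A π d := by
    intro y hy
    choose r hr using hy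
    have hyeq : y = ∑ i, r i • ε i := by
      funext j
      rw [Finset.sum_apply]
      have h1 : ∀ i, (r i • ε i) j = alg (r i) * ε i j := by
        intro i; rw [Pi.smul_apply, Algebra.smul_def]
      have h2 : ∀ i, alg (r i) * ε i j = if j = i then alg (r i) else 0 := by
        intro i; rw [hεapp]; split <;> simp
      simp only [h1, h2]
      rw [Finset.sum_ite_eq Finset.univ j (fun i => alg (r i))]
      simp [hr j]
    rw [hyeq]
    exact Submodule.sum_mem _ fun i _ => Submodule.smul_mem _ _ (hεstd i)
  -- basic members of E
  have hTaε : ∀ j : Fin d, (T ^ a) • ε j ∈ E := by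
    intro j
    apply hlow
    refine ⟨ε j, hεstd j, ?_⟩
    rw [LinearMap.restrictScalars_apply, LinearMap.lsmul_apply, halgpow]
  have hstep : ∀ u ∈ E, ∀ i, T ^ a * u i ∈ alg.range := by
    intro u hu i
    obtain ⟨y, hy, hyu⟩ := hhigh hu
    rw [LinearMap.restrictScalars_apply, LinearMap.lsmul_apply] at hyu
    have : T ^ a * u i = y i := by
      rw [← hyu, Pi.smul_apply, smul_eq_mul, ← mul_assoc, hTa, one_mul]
    rw [this]
    exact hstd1 y hy i
  have hpairε : ∀ (z : Fin d → Sloc A π) (i₀ : Fin d),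
      ∑ j, z j * ((T ^ a) • ε i₀) j = T ^ a * z i₀ := by
    intro z i₀
    have h1 : ∀ j, z j * ((T ^ a) • ε i₀) j = if j = i₀ then z j * T ^ a else 0 := by
      intro j
      rw [Pi.smul_apply, smul_eq_mul, hεapp]
      split <;> ring
    simp only [h1]
    rw [Finset.sum_ite_eq' Finset.univ i₀ (fun j => z j * T ^ a)]
    simp [mul_comm]
  -- projective coordinates
  have main : ∃ (n : ℕ) (w v : Fin n → Fin d → Sloc A π),
      (∀ k, w k ∈ E) ∧
      (∀ k, ∀ x ∈ E, ∑ j, v k j * x j ∈ alg.range) ∧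
      (∀ i j, ∑ k, v k j * w k i = if i = j then 1 else 0) := by
    haveI : Module.Finite (Polynomial A) E := Module.Finite.iff_fg.mpr hFG
    obtain ⟨n, g, hg⟩ := Module.Finite.exists_fin (R := Polynomial A) (M := E)
    have hsurj : Function.Surjective
        (Fintype.linearCombination (Polynomial A) g) := by
      rw [← LinearMap.range_eq_top, Fintype.range_linearCombination, hg]
    obtain ⟨s, hs⟩ := Module.projective_lifting_property _ LinearMap.id hsurj
    have hgs : ∀ x : E, ∑ k, s x k • g k = x := by
      intro x
      have := congrArg (fun f => f x) hs
      simpa [Fintype.linearCombination_apply] using this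
    have hgs' : ∀ (x : E) (i : Fin d),
        (x : Fin d → Sloc A π) i = ∑ k, alg (s x k) * (g k : Fin d → Sloc A π) i := by
      intro x i
      conv_lhs => rw [← hgs x]
      rw [Submodule.coe_sum, Finset.sum_apply]
      exact Finset.sum_congr rfl fun k _ => by
        rw [SetLike.val_smul, Pi.smul_apply, Algebra.smul_def]
    set y : Fin d → E := fun j => ⟨(T ^ a) • ε j, hTaε j⟩ with hydef
    set v : Fin n → Fin d → Sloc A π := fun k j => Ti ^ a * alg (s (y j) k) with hvdef
    have hvT : ∀ k j, T ^ a * v k j = alg (s (y j) k) := by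
      intro k j
      rw [hvdef]
      dsimp only
      rw [← mul_assoc, hTa, one_mul]
    have hpair : ∀ (k : Fin n) (x : E),
        ∑ j, v k j * (x : Fin d → Sloc A π) j = alg (s x k) := by
      intro k x
      have hU2 : IsUnit (T ^ a * T ^ a) := hUT.mul hUT
      apply hU2.mul_left_cancel
      choose r hr using fun j => hstep (x : Fin d → Sloc A π) x.2 j
      rw [Finset.mul_sum]
      have step1 : ∀ j, T ^ a * T ^ a * (v k j * (x : Fin d → Sloc A π) j)
          = alg (s (y j) k * r j) := by
        intro j
        have e1 : T ^ a * T ^ a * (v k j * (x : Fin d → Sloc A π) j)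
            = (T ^ a * v k j) * (T ^ a * (x : Fin d → Sloc A π) j) := by ring
        rw [e1, hvT, ← hr j, ← map_mul]
      simp only [step1]
      rw [← map_sum]
      have hxsum : (∑ j, s (y j) k * r j) = (t ^ a * t ^ a) * s x k := by
        have hyx : ((t ^ a * t ^ a) • x : E) = ∑ j, r j • y j := by
          apply Subtype.ext
          rw [Submodule.coe_sum]
          funext i
          rw [Finset.sum_apply]
          have h1 : ∀ j, ((r j • y j : E) : Fin d → Sloc A π) i
              = if i = j then alg (r j) * T ^ a else 0 := by
            intro j
            rw [SetLike.val_smul, Pi.smul_apply, Algebra.smul_def, hydef]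
            dsimp only
            rw [Pi.smul_apply, smul_eq_mul, hεapp]
            split <;> ring
          simp only [h1]
          rw [Finset.sum_ite_eq Finset.univ i (fun j => alg (r j) * T ^ a)]
          simp only [Finset.mem_univ, if_true]
          rw [hr i]
          rw [SetLike.val_smul, Pi.smul_apply, Algebra.smul_def, ← halgdef, map_mul, halgpow]
          ring
        have := congrArg (fun z : E => s z k) hyx
        rw [map_smul, Pi.smul_apply, smul_eq_mul] at this
        rw [map_sum] at this
        simp only [Finset.sum_apply] at this
        calc ∑ j, s (y j) k * r j = ∑ j, s (r j • y j) k :=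
              Finset.sum_congr rfl fun j _ => by
                rw [map_smul, Pi.smul_apply, smul_eq_mul, mul_comm]
          _ = t ^ a * t ^ a * s x k := this.symm
      rw [hxsum, map_mul, map_mul, halgpow]
    refine ⟨n, fun k => (g k : Fin d → Sloc A π), v, fun k => (g k).2, ?_, ?_⟩
    · intro k x hx
      rw [hpair k ⟨x, hx⟩]
      exact RingHom.mem_range_self _ _
    · intro i j
      apply hUT.mul_left_cancel
      have h1 := hgs' (y j) i
      have h2 : ((y j : E) : Fin d → Sloc A π) i = T ^ a * (if i = j then 1 else 0) := by
        rw [hydef]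
        dsimp only
        rw [Pi.smul_apply, smul_eq_mul, hεapp]
      rw [h2] at h1
      rw [Finset.mul_sum]
      have h7 : ∀ k : Fin n, T ^ a * (v k j * (g k : Fin d → Sloc A π) i)
          = alg (s (y j) k) * (g k : Fin d → Sloc A π) i := by
        intro k; rw [← mul_assoc, hvT]
      simp only [h7]
      exact h1.symm
  obtain ⟨n, w, v, hw, hv, K⟩ := main
  -- reconstruction identities
  have hrec : ∀ (x : Fin d → Sloc A π) (i : Fin d),
      ∑ k, (∑ j, x j * v k j) * w k i = x i := by
    intro x i
    have h1 : ∀ k, (∑ j, x j * v k j) * w k i = ∑ j, x j * (v k j * w k i) := by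
      intro k; rw [Finset.sum_mul]; exact Finset.sum_congr rfl fun j _ => by ring
    simp only [h1]
    rw [Finset.sum_comm]
    have h2 : ∀ j, ∑ k, x j * (v k j * w k i) = if i = j then x j else 0 := by
      intro j
      rw [← Finset.mul_sum, K i j]
      split <;> ring
    simp only [h2]
    rw [Finset.sum_ite_eq Finset.univ i (fun j => x j)]
    simp
  have hrec' : ∀ (x : Fin d → Sloc A π) (j : Fin d),
      ∑ k, (∑ i, x i * w k i) * v k j = x j := by
    intro x j
    have h1 : ∀ k, (∑ i, x i * w k i) * v k j = ∑ i, x i * (v k j * w k i) := by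
      intro k; rw [Finset.sum_mul]; exact Finset.sum_congr rfl fun i _ => by ring
    simp only [h1]
    rw [Finset.sum_comm]
    have h2 : ∀ i, ∑ k, x i * (v k j * w k i) = if i = j then x i else 0 := by
      intro i
      rw [← Finset.mul_sum, K i j]
      split <;> ring
    simp only [h2]
    rw [Finset.sum_ite_eq' Finset.univ j (fun i => x i)]
    simp
  -- the dual submodule
  set Estar : Submodule (Polynomial A) (Fin d → Sloc A π) :=
    ⨅ (q : Fin d → Sloc A π) (_ : q ∈ E), pairSub A π d q with hEstardef
  have hmem : ∀ z : Fin d → Sloc A π,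
      z ∈ Estar ↔ ∀ q ∈ E, ∑ i, z i * q i ∈ alg.range := by
    intro z
    rw [hEstardef]
    simp only [Submodule.mem_iInf]
    rfl
  have hcoe : (Estar : Set (Fin d → Sloc A π)) = dualSet A π d E := by
    ext z
    rw [SetLike.mem_coe, hmem]
    rfl
  have hvmem : ∀ k, v k ∈ Estar := fun k => (hmem (v k)).2 (hv k)
  -- lower bound
  have hlowstar : scaleLat A π d (alg (t ^ a)) (stdLat A π d) ≤ Estar := by
    rintro x ⟨z, hz, hzx⟩
    rw [LinearMap.restrictScalars_apply, LinearMap.lsmul_apply] at hzx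
    rw [hmem]
    intro q hq
    have h1 : ∀ i, x i * q i = z i * (T ^ a * q i) := by
      intro i
      rw [← hzx, Pi.smul_apply, smul_eq_mul, halgpow]
      ring
    simp only [h1]
    exact sum_mem fun i _ => mul_mem (hstd1 z hz i) (hstep q hq i)
  -- upper bound
  have hhighstar : Estar ≤ scaleLat A π d (Ti ^ a) (stdLat A π d) := by
    intro z hz
    refine ⟨fun i => T ^ a * z i, ?_, ?_⟩
    · apply hstd2
      intro i
      have := (hmem z).1 hz ((T ^ a) • ε i) (hTaε i)
      rwa [hpairε z i] at this
    · rw [LinearMap.restrictScalars_apply, LinearMap.lsmul_apply]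
      funext i
      rw [Pi.smul_apply, smul_eq_mul, ← mul_assoc, hTia, one_mul]
  -- Estar is spanned by the v k
  have hspan : Estar = Submodule.span (Polynomial A) (Set.range v) := by
    apply le_antisymm
    · intro z hz
      rw [hmem] at hz
      choose r hr using fun k => hz (w k) (hw k)
      have hzeq : z = ∑ k, r k • v k := by
        funext j
        rw [Finset.sum_apply]
        have h1 : ∀ k, (r k • v k) j = (∑ i, z i * w k i) * v k j := by
          intro k
          rw [Pi.smul_apply, Algebra.smul_def, hr k]
        simp only [h1]
        exact (hrec' z j).symm ▸ hrec' z j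
      rw [hzeq]
      exact Submodule.sum_mem _ fun k _ =>
        Submodule.smul_mem _ _ (Submodule.subset_span ⟨k, rfl⟩)
    · rw [Submodule.span_le]
      rintro _ ⟨k, rfl⟩
      exact hvmem k
  refine ⟨Estar, hcoe, ?_, ?_, ?_, hlowstar, hhighstar, ?_, ?_⟩
  -- FG
  · rw [hspan]
    exact Submodule.fg_span (Set.finite_range v)
  -- projective
  · have hchoice : ∀ (z : Estar) (k : Fin n),
        ∃ r : Polynomial A, alg r = ∑ i, (z : Fin d → Sloc A π) i * w k i :=
      fun z k => (hmem z).1 z.2 (w k) (hw k)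
    choose σ0 hσ0 using hchoice
    have hσadd : ∀ z z' : Estar, σ0 (z + z') = σ0 z + σ0 z' := by
      intro z z'
      funext k
      apply halg
      rw [Pi.add_apply, map_add, hσ0, hσ0, hσ0]
      rw [← Finset.sum_add_distrib]
      exact Finset.sum_congr rfl fun i _ => by
        show ((z : Fin d → Sloc A π) + (z' : Fin d → Sloc A π)) i * w k i = _
        rw [Pi.add_apply]; ring
    have hσsmul : ∀ (c : Polynomial A) (z : Estar), σ0 (c • z) = c • σ0 z := by
      intro c z
      funext k
      apply halg
      rw [hσ0]
      show _ = alg ((c • σ0 z) k)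
      rw [Pi.smul_apply, smul_eq_mul, map_mul, hσ0]
      rw [Finset.mul_sum]
      exact Finset.sum_congr rfl fun i _ => by
        show ((c • (z : Fin d → Sloc A π)) i) * w k i = _
        rw [Pi.smul_apply, Algebra.smul_def]
        ring
    set σ : Estar →ₗ[Polynomial A] (Fin n → Polynomial A) :=
      { toFun := σ0
        map_add' := hσadd
        map_smul' := hσsmul } with hσdef
    set p : (Fin n → Polynomial A) →ₗ[Polynomial A] Estar :=
      LinearMap.codRestrict Estar
        (Fintype.linearCombination (Polynomial A) v)
        (fun c => by
          rw [Fintype.linearCombination_apply]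
          exact Submodule.sum_mem _ fun k _ => Submodule.smul_mem _ _ (hvmem k)) with hpdef
    have hsplit : p.comp σ = LinearMap.id := by
      apply LinearMap.ext
      intro z
      apply Subtype.ext
      show (Fintype.linearCombination (Polynomial A) v) (σ0 z) = _
      rw [Fintype.linearCombination_apply]
      funext j
      rw [Finset.sum_apply]
      have h1 : ∀ k, (σ0 z k • v k) j = (∑ i, (z : Fin d → Sloc A π) i * w k i) * v k j := by
        intro k
        rw [Pi.smul_apply, Algebra.smul_def, hσ0]
      simp only [h1]
      exact hrec' (z : Fin d → Sloc A π) j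
    exact Module.Projective.of_split σ p hsplit
  -- rank
  · have hrkscale : ∀ (c : Sloc A π), IsUnit c →
        ∀ N : Submodule (Polynomial A) (Fin d → Sloc A π),
          Module.rank (Polynomial A) (scaleLat A π d c N) = Module.rank (Polynomial A) N := by
      intro c hc N
      have hinj : Function.Injective
          ((LinearMap.lsmul (Sloc A π) (Fin d → Sloc A π) c).restrictScalars (Polynomial A)) := by
        intro x1 x2 h
        rw [LinearMap.restrictScalars_apply, LinearMap.lsmul_apply,
          LinearMap.restrictScalars_apply, LinearMap.lsmul_apply] at h
        obtain ⟨u, rfl⟩ := hc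
        have := congrArg (fun z => ((u⁻¹ : (Sloc A π)ˣ) : Sloc A π) • z) h
        simpa [smul_smul] using this
      exact (LinearEquiv.rank_eq (Submodule.equivMapOfInjective _ hinj N)).symm
    have hUt : IsUnit (alg (t ^ a)) := halgpow ▸ hUT
    have e1 : Module.rank (Polynomial A) (scaleLat A π d (alg (t ^ a)) (stdLat A π d))
        = Module.rank (Polynomial A) (stdLat A π d) := hrkscale _ hUt _
    have e2 : Module.rank (Polynomial A) (scaleLat A π d (Ti ^ a) (stdLat A π d))
        = Module.rank (Polynomial A) (stdLat A π d) := hrkscale _ hUTi _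
    apply le_antisymm
    · calc Module.rank (Polynomial A) Estar
          ≤ Module.rank (Polynomial A) (scaleLat A π d (Ti ^ a) (stdLat A π d)) :=
            Submodule.rank_mono hhighstar
        _ = Module.rank (Polynomial A) (scaleLat A π d (alg (t ^ a)) (stdLat A π d)) := by
            rw [e1, e2]
        _ ≤ Module.rank (Polynomial A) E := Submodule.rank_mono hlow
    · calc Module.rank (Polynomial A) E
          ≤ Module.rank (Polynomial A) (scaleLat A π d (Ti ^ a) (stdLat A π d)) :=
            Submodule.rank_mono hhigh
        _ = Module.rank (Polynomial A) (scaleLat A π d (alg (t ^ a)) (stdLat A π d)) := by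
            rw [e1, e2]
        _ ≤ Module.rank (Polynomial A) Estar := Submodule.rank_mono hlowstar
  -- double dual
  · ext u
    constructor
    · intro hu
      have hu' : ∀ q ∈ Estar, ∑ i, u i * q i ∈ alg.range := hu
      choose r hr using fun k => hu' (v k) (hvmem k)
      have hueq : u = ∑ k, r k • w k := by
        funext i
        rw [Finset.sum_apply]
        have h1 : ∀ k, (r k • w k) i = (∑ j, u j * v k j) * w k i := by
          intro k
          rw [Pi.smul_apply, Algebra.smul_def, hr k]
        simp only [h1]
        exact (hrec u i).symm
      rw [SetLike.mem_coe, hueq]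
      exact Submodule.sum_mem _ fun k _ => Submodule.smul_mem _ _ (hw k)
    · intro hu q hq
      have hq' := (hmem q).1 hq u (SetLike.mem_coe.1 hu)
      have hswap : ∑ i, u i * q i = ∑ i, q i * u i :=
        Finset.sum_congr rfl fun i _ => mul_comm _ _
      rwa [hswap]
  -- matrix description
  · intro Xm Xi h1 h2 hE
    have hcol : ∀ j, (fun i => Xm i j) ∈ E := by
      intro j
      rw [hE]
      exact Submodule.subset_span ⟨j, rfl⟩
    apply le_antisymm
    · intro z hz
      rw [hmem] at hz
      choose r hr using fun j => hz _ (hcol j)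
      have hzeq : z = ∑ j, r j • (fun i => Xi j i) := by
        funext i
        rw [Finset.sum_apply]
        have h3 : ∀ j, (r j • (fun i => Xi j i) : Fin d → Sloc A π) i
            = (∑ m, z m * Xm m j) * Xi j i := by
          intro j
          rw [Pi.smul_apply, Algebra.smul_def, hr j]
        simp only [h3]
        have h4 : ∀ j, (∑ m, z m * Xm m j) * Xi j i = ∑ m, z m * (Xm m j * Xi j i) := by
          intro j; rw [Finset.sum_mul]; exact Finset.sum_congr rfl fun m _ => by ring
        simp only [h4]
        rw [Finset.sum_comm]
        have h5 : ∀ m, ∑ j, z m * (Xm m j * Xi j i) = z m * (Xm * Xi) m i := by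
          intro m; rw [← Finset.mul_sum, Matrix.mul_apply]
        simp only [h5, h1, Matrix.one_apply]
        simp only [mul_ite, mul_one, mul_zero]
        rw [Finset.sum_ite_eq' Finset.univ i (fun m => z m)]
        simp
      rw [hzeq]
      exact Submodule.sum_mem _ fun j _ =>
        Submodule.smul_mem _ _ (Submodule.subset_span ⟨j, rfl⟩)
    · rw [Submodule.span_le]
      rintro _ ⟨j, rfl⟩
      rw [SetLike.mem_coe, hmem]
      intro q hq
      have hq' : q ∈ pairSub A π d (fun i => Xi j i) := by
        rw [hE] at hq
        refine Submodule.span_le.2 ?_ hq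
        rintro _ ⟨k, rfl⟩
        rw [SetLike.mem_coe, mem_pairSub]
        have : ∑ i, Xm i k * Xi j i = (Xi * Xm) j k := by
          rw [Matrix.mul_apply]
          exact Finset.sum_congr rfl fun i _ => mul_comm _ _
        rw [this, h2, Matrix.one_apply]
        split
        · exact ⟨1, map_one _⟩
        · exact ⟨0, map_zero _⟩
      rw [mem_pairSub] at hq'
      have hswap : ∑ i, (fun i => Xi j i) i * q i = ∑ i, q i * Xi j i :=
        Finset.sum_congr rfl fun i _ => mul_comm _ _
      rwa [hswap]
end

section
/- Let A be a commutative ring and let E(u) ∈ A[u] be monic of degree e that factors as E(u) = ∏_{κ=1}^{e} (u - π_κ) with π_κ ∈ A. Let Fil^• be a decreasing filtration of A^d by direct summands, concentrated in degrees [−n, 0] (so Fil^{-n} = A^d and Fil^1 = 0), and define, for a fixed κ, the A[u]-module E := Σ_{i = 0}^{n} (u - π_κ)^{i} · A[u] · Fil^{-i} ⊆ A[u]^d (embedding A^d as constant vectors). Then ∇(E) ⊆ (u/(u - π_κ)) · E, where ∇ = u·d/du acts coordinatewise on A[u]^d; in particular E(u)·∇(E) ⊆ u·E inside A[u][1/E(u)]^d.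 -/
open Polynomial

/-- Auxiliary submodule: elements of `E` whose ∇ lands in `(u/(u-π))·E`. -/
noncomputable def auxS (A : Type*) [CommRing A] (d : ℕ) (π : A)
    (E : Submodule (Polynomial A) (Fin d → Polynomial A)) :
    Submodule (Polynomial A) (Fin d → Polynomial A) where
  carrier := {x | x ∈ E ∧ ∃ z ∈ E, ∀ j, (X - C π) * (X * derivative (x j)) = X * z j}
  zero_mem' := ⟨E.zero_mem, 0, E.zero_mem, fun j => by simp⟩
  add_mem' := by
    rintro a b ⟨ha, za, hza, ea⟩ ⟨hb, zb, hzb, eb⟩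
    refine ⟨E.add_mem ha hb, za + zb, E.add_mem hza hzb, fun j => ?_⟩
    simp only [Pi.add_apply, derivative_add]
    linear_combination ea j + eb j
  smul_mem' := by
    rintro f x ⟨hx, z, hz, e⟩
    refine ⟨E.smul_mem f hx, derivative f • ((X - C π) • x) + f • z,
      E.add_mem (E.smul_mem _ (E.smul_mem _ hx)) (E.smul_mem f hz), fun j => ?_⟩
    simp only [Pi.smul_apply, Pi.add_apply, smul_eq_mul, derivative_mul]
    linear_combination f * e j

theorem stmt_14 (A : Type*) [CommRing A] (d e n : ℕ)
    (πs : Fin e → A) (κ : Fin e)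
    (Fil : ℤ → Submodule A (Fin d → A))
    (hdec : ∀ i j : ℤ, i ≤ j → Fil j ≤ Fil i)
    (hbot : Fil 1 = ⊥) (htop : Fil (-(n : ℤ)) = ⊤)
    (hsummand : ∀ i : ℤ, ∃ q : Submodule A (Fin d → A), IsCompl (Fil i) q)
    (E : Submodule (Polynomial A) (Fin d → Polynomial A))
    (hE : E = ⨆ i ∈ Finset.range (n + 1),
      Submodule.span (Polynomial A)
        ((fun v : Fin d → A => fun j => (X - C (πs κ)) ^ i * C (v j)) ''
          (Fil (-(i : ℤ)) : Set (Fin d → A)))) :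
    (∀ x ∈ E, ∃ z ∈ E, ∀ j, (X - C (πs κ)) * (X * derivative (x j)) = X * z j)
    ∧ ∀ x ∈ E, ∃ z ∈ E, ∀ j,
        (∏ κ' : Fin e, (X - C (πs κ'))) * (X * derivative (x j)) = X * z j := by
  have hES : E ≤ auxS A d (πs κ) E := by
    nth_rewrite 1 [hE]
    refine iSup₂_le fun i hi => Submodule.span_le.2 ?_
    rintro _ ⟨v, hv, rfl⟩
    have hxE : (fun j => (X - C (πs κ)) ^ i * C (v j)) ∈ E := by
      rw [hE]
      exact Submodule.mem_iSup_of_mem i (Submodule.mem_iSup_of_mem hi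
        (Submodule.subset_span ⟨v, hv, rfl⟩))
    refine ⟨hxE, ((i : Polynomial A)) • ((fun j => (X - C (πs κ)) ^ i * C (v j)) : Fin d → Polynomial A),
      E.smul_mem _ hxE, fun j => ?_⟩
    simp only [Pi.smul_apply, smul_eq_mul, derivative_mul, derivative_pow,
      derivative_X_sub_C, derivative_C, mul_zero, add_zero, mul_one]
    cases i with
    | zero => simp
    | succ m =>
      simp only [Nat.add_sub_cancel, pow_succ, C_eq_natCast]
      ring
  have h1 : ∀ x ∈ E, ∃ z ∈ E, ∀ j,
      (X - C (πs κ)) * (X * derivative (x j)) = X * z j :=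
    fun x hx => (hES hx).2
  refine ⟨h1, fun x hx => ?_⟩
  obtain ⟨z, hz, e⟩ := h1 x hx
  refine ⟨(∏ κ' ∈ Finset.univ.erase κ, (X - C (πs κ'))) • z, E.smul_mem _ hz, fun j => ?_⟩
  rw [← Finset.mul_prod_erase Finset.univ _ (Finset.mem_univ κ)]
  simp only [Pi.smul_apply, smul_eq_mul]
  linear_combination (∏ κ' ∈ Finset.univ.erase κ, (X - C (πs κ'))) * e j
end
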